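/- Let Σ be a symmetric positive definite 2×2 matrix with smallest eigenvalue λ_min(Σ), let ϖ > 0 and D_safe ≥ 0, and let μ ∈ ℝ². Define the Mahalanobis norm ‖x‖_M = √(xᵀ Σ⁻¹ x) and the confidence ellipse E_ϖ = {e : eᵀ Σ⁻¹ e ≤ ϖ}. If ‖μ‖_M > √ϖ + D_safe/√(λ_min(Σ)), then for all e ∈ E_ϖ and all u with ‖u‖ ≤ D_safe, we have ‖μ + e + u‖_M > 0; equivalently, the origin is not contained in μ + E_ϖ ⊕ {u : ‖u‖ ≤ D_safe}. -/

import Mathlib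

open Matrix

lemma maha_tri {M : Matrix (Fin 2) (Fin 2) ℝ} (hM : M.PosDef) (a b : Fin 2 → ℝ) :
    Real.sqrt ((a + b) ⬝ᵥ M *ᵥ (a + b)) ≤
      Real.sqrt (a ⬝ᵥ M *ᵥ a) + Real.sqrt (b ⬝ᵥ M *ᵥ b) := by
  letI instN : NormedAddCommGroup (Fin 2 → ℝ) := Matrix.toNormedAddCommGroup M hM
  letI instI : @InnerProductSpace ℝ (Fin 2 → ℝ) _ instN.toSeminormedAddCommGroup :=
    Matrix.toInnerProductSpace M hM.posSemidef
  have hnorm : ∀ x : Fin 2 → ℝ, instN.norm x = Real.sqrt (x ⬝ᵥ M *ᵥ x) := by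
    intro x
    rw [@norm_eq_sqrt_real_inner (Fin 2 → ℝ) instN.toSeminormedAddCommGroup instI x]
    congr 1
    show (M *ᵥ x) ⬝ᵥ star x = _
    rw [star_trivial, dotProduct_comm]
  rw [← hnorm, ← hnorm, ← hnorm]
  exact @norm_add_le _ (@SeminormedAddCommGroup.toSeminormedAddGroup _
    instN.toSeminormedAddCommGroup) a b

lemma inv_quad_le (S : Matrix (Fin 2) (Fin 2) ℝ) (hS : S.PosDef) (x : Fin 2 → ℝ) :
    x ⬝ᵥ S⁻¹ *ᵥ x ≤ (x ⬝ᵥ x) / (⨅ i, hS.1.eigenvalues i) := by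
  classical
  set d := hS.1.eigenvalues with hd
  set U : Matrix (Fin 2) (Fin 2) ℝ := (hS.1.eigenvectorUnitary : Matrix (Fin 2) (Fin 2) ℝ) with hUdef
  have hdpos : ∀ i, 0 < d i := hS.eigenvalues_pos
  have hspec : S = U * diagonal d * star U := by
    have := hS.1.spectral_theorem
    simpa using this
  have hU1 : U * star U = 1 := mem_unitaryGroup_iff.mp hS.1.eigenvectorUnitary.2
  have hU2 : star U * U = 1 := mem_unitaryGroup_iff'.mp hS.1.eigenvectorUnitary.2
  have key : ∀ (c e : Fin 2 → ℝ), (U * diagonal c * star U) * (U * diagonal e * star U)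
      = U * diagonal (c * e) * star U := by
    intro c e
    calc (U * diagonal c * star U) * (U * diagonal e * star U)
        = U * diagonal c * ((star U * U) * (diagonal e * star U)) := by
          simp only [Matrix.mul_assoc]
      _ = U * diagonal c * (diagonal e * star U) := by rw [hU2, Matrix.one_mul]
      _ = U * (diagonal c * diagonal e) * star U := by simp only [Matrix.mul_assoc]
      _ = U * diagonal (c * e) * star U := by rw [diagonal_mul_diagonal]; rfl
  have hinv : S⁻¹ = U * diagonal (fun i => (d i)⁻¹) * star U := by
    apply inv_eq_right_inv
    rw [hspec, key]
    have : d * (fun i => (d i)⁻¹) = 1 := by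
      funext i
      exact mul_inv_cancel₀ (hdpos i).ne'
    rw [this]
    have h1 : diagonal (1 : Fin 2 → ℝ) = (1 : Matrix (Fin 2) (Fin 2) ℝ) := by
      ext i j
      by_cases h : i = j <;> simp [diagonal, h, Matrix.one_apply]
    rw [h1, Matrix.mul_one, hU1]
  have hstar : star U = Uᵀ := by
    ext i j
    simp [Matrix.star_apply]
  set y := star U *ᵥ x with hy
  have hdot : ∀ z : Fin 2 → ℝ, x ⬝ᵥ U *ᵥ z = y ⬝ᵥ z := by
    intro z
    rw [dotProduct_mulVec, hy, hstar, ← Matrix.mulVec_transpose]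
  have hquad : ∀ c : Fin 2 → ℝ, x ⬝ᵥ (U * diagonal c * star U) *ᵥ x
      = ∑ i, c i * (y i * y i) := by
    intro c
    rw [← mulVec_mulVec, ← mulVec_mulVec, hdot, ← hy]
    simp [dotProduct, mulVec_diagonal]
    ring_nf
  have hxx : x ⬝ᵥ x = ∑ i, y i * y i := by
    have h1 : x ⬝ᵥ (U * star U) *ᵥ x = y ⬝ᵥ y := by
      rw [← mulVec_mulVec, hdot]
    rw [hU1, Matrix.one_mulVec] at h1
    simpa [dotProduct] using h1
  set lam := ⨅ i, d i with hlam
  have hlampos : 0 < lam := by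
    obtain ⟨i, hi⟩ := exists_eq_ciInf_of_finite (f := d)
    rw [hlam, ← hi]
    exact hdpos i
  have hle : ∀ i, lam ≤ d i := fun i => ciInf_le (Finite.bddBelow_range d) i
  rw [hinv, hquad, hxx, Finset.sum_div]
  apply Finset.sum_le_sum
  intro i _
  rw [div_eq_mul_inv ((y i) * y i) lam, mul_comm (y i * y i) lam⁻¹]
  exact mul_le_mul_of_nonneg_right
    (inv_anti₀ hlampos (hle i)) (mul_self_nonneg _)

/-- Lemma 2 of the paper: if `‖μ‖_M > √ϖ + D_safe/√(λ_min(Σ))`, then for every `e` in the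
confidence ellipse `{e : eᵀ Σ⁻¹ e ≤ ϖ}` and every `u` with Euclidean norm `≤ D_safe`,
`‖μ + e + u‖_M > 0` (the origin is not in `μ + E_ϖ ⊕ D_safe`-ball). -/
theorem stmt_3 (S : Matrix (Fin 2) (Fin 2) ℝ) (hS : S.PosDef)
    (ϖ Dsafe : ℝ) (hϖ : 0 < ϖ) (hD : 0 ≤ Dsafe) (μ : Fin 2 → ℝ)
    (hμ : Real.sqrt (μ ⬝ᵥ S⁻¹ *ᵥ μ) >
      Real.sqrt ϖ + Dsafe / Real.sqrt (⨅ i, hS.1.eigenvalues i)) :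
    ∀ e : Fin 2 → ℝ, e ⬝ᵥ S⁻¹ *ᵥ e ≤ ϖ →
      ∀ u : Fin 2 → ℝ, Real.sqrt (u ⬝ᵥ u) ≤ Dsafe →
        0 < Real.sqrt ((μ + e + u) ⬝ᵥ S⁻¹ *ᵥ (μ + e + u)) := by
  intro e he u hu
  have hM : (S⁻¹).PosDef := hS.inv
  by_contra hcon
  push_neg at hcon
  set v := μ + e + u with hv
  -- v must be zero
  have hv0 : v = 0 := by
    by_contra hne
    have := hM.re_dotProduct_pos hne
    simp only [RCLike.re_to_real] at this
    have h2 : (0:ℝ) < Real.sqrt (v ⬝ᵥ S⁻¹ *ᵥ v) := by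
      apply Real.sqrt_pos.mpr
      simpa [dotProduct] using this
    linarith
  have hμeq : μ = -(e + u) := by
    have h0 : μ + (e + u) = 0 := by rw [← add_assoc]; exact hv0
    exact eq_neg_of_add_eq_zero_left h0
  -- bound the Mahalanobis norm of μ
  set lam := ⨅ i, hS.1.eigenvalues i with hlam
  have hlampos : 0 < lam := by
    obtain ⟨i, hi⟩ := exists_eq_ciInf_of_finite (f := hS.1.eigenvalues)
    rw [hlam, ← hi]
    exact hS.eigenvalues_pos i
  have hμq : μ ⬝ᵥ S⁻¹ *ᵥ μ = (e + u) ⬝ᵥ S⁻¹ *ᵥ (e + u) := by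
    rw [hμeq, Matrix.mulVec_neg, neg_dotProduct, dotProduct_neg, neg_neg]
  have htri : Real.sqrt (μ ⬝ᵥ S⁻¹ *ᵥ μ) ≤
      Real.sqrt (e ⬝ᵥ S⁻¹ *ᵥ e) + Real.sqrt (u ⬝ᵥ S⁻¹ *ᵥ u) := by
    rw [hμq]
    exact maha_tri hM e u
  have he' : Real.sqrt (e ⬝ᵥ S⁻¹ *ᵥ e) ≤ Real.sqrt ϖ := Real.sqrt_le_sqrt he
  have hu' : Real.sqrt (u ⬝ᵥ S⁻¹ *ᵥ u) ≤ Dsafe / Real.sqrt lam := by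
    have h1 : u ⬝ᵥ S⁻¹ *ᵥ u ≤ (u ⬝ᵥ u) / lam := inv_quad_le S hS u
    have h2 : Real.sqrt (u ⬝ᵥ S⁻¹ *ᵥ u) ≤ Real.sqrt ((u ⬝ᵥ u) / lam) :=
      Real.sqrt_le_sqrt h1
    have huu : 0 ≤ u ⬝ᵥ u := Finset.sum_nonneg fun i _ => mul_self_nonneg _
    have h3 : Real.sqrt ((u ⬝ᵥ u) / lam) = Real.sqrt (u ⬝ᵥ u) / Real.sqrt lam :=
      Real.sqrt_div huu lam
    rw [h3] at h2
    have h4 : Real.sqrt (u ⬝ᵥ u) / Real.sqrt lam ≤ Dsafe / Real.sqrt lam := by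
      gcongr
    linarith
  linarith
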